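/- Let A > 0, n ≥ 1, b ≥ 0, m ≥ 0 with b + m ≤ 1, and C₀, C₁, C₂ > 0. Let ε ∈ (0, e^{-1}). Suppose: g: [0,A] → ℝⁿ is continuous with sup_{x∈[0,A]} ‖g(x)‖ ≤ C₀·|log ε|; k: [0,A] × [0,A] × ℝⁿ → ℝⁿ satisfies k(x,y,0) = 0 and ‖k(x,y,u) - k(x,y,v)‖ ≤ C₁·|log ε|^b·‖u-v‖ for all x,y,u,v; h: [0,A] × [0,A] → ℝ is measurable with |h(x,y)| ≤ C₂·|log ε|^m. If f: [0,A] → ℝⁿ is continuous and satisfies f(x) = g(x) + ∫_0^x h(x,y)·k(x, y, f(y)) dy for all x ∈ [0,A], then sup_{x∈[0,A]} ‖f(x)‖ ≤ C₀·|log ε|·exp(C₁·C₂·|log ε|^{b+m}·A); in particular there exist C > 0 and N ∈ ℕ, depending only on A, C₀, C₁, C₂ (not on ε), such that sup_{x∈[0,A]} ‖f(x)‖ ≤ C·ε^{-N}. -/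

import Mathlib

open MeasureTheory Real Set

/-- Hypotheses of the moderateness estimate for the regularized system of
Volterra integral equations with polar kernel: `g` is the (logarithmically
bounded) regularized free term, `k` the cut-off kernel with Lipschitz
constant `C₁|log ε|^b` vanishing at `0`, `h` the regularized polar-kernel
factor bounded by `C₂|log ε|^m`, and `f` a continuous solution of
`f(x) = g(x) + ∫_0^x h(x,y)·k(x,y,f(y)) dy` on `[0,A]`. -/
def VolterraHyp {n : ℕ} (A b m C₀ C₁ C₂ ε : ℝ)
    (g : ℝ → EuclideanSpace ℝ (Fin n))
    (k : ℝ → ℝ → EuclideanSpace ℝ (Fin n) → EuclideanSpace ℝ (Fin n))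
    (h : ℝ → ℝ → ℝ)
    (f : ℝ → EuclideanSpace ℝ (Fin n)) : Prop :=
  ContinuousOn g (Icc 0 A) ∧
  (∀ x ∈ Icc (0 : ℝ) A, ‖g x‖ ≤ C₀ * |Real.log ε|) ∧
  (∀ x y : ℝ, k x y 0 = 0) ∧
  (∀ (x y : ℝ) (u v : EuclideanSpace ℝ (Fin n)),
    ‖k x y u - k x y v‖ ≤ C₁ * |Real.log ε| ^ b * ‖u - v‖) ∧
  Measurable (Function.uncurry h) ∧
  (∀ x y : ℝ, |h x y| ≤ C₂ * |Real.log ε| ^ m) ∧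
  ContinuousOn f (Icc 0 A) ∧
  (∀ x ∈ Icc (0 : ℝ) A, f x = g x + ∫ y in Ioc (0 : ℝ) x, h x y • k x y (f y))

/-- moderateness (a priori) estimate for the regularized
Volterra system: under the hypotheses above with `b + m ≤ 1`,
`sup_{[0,A]} ‖f‖ ≤ C₀·|log ε|·exp(C₁C₂|log ε|^{b+m}·A)`; in particular there
are `C > 0` and `N ∈ ℕ` independent of `ε` with `sup_{[0,A]} ‖f‖ ≤ C·ε^{-N}`. -/
lemma volterra_key {n : ℕ} (A b m C₀ C₁ C₂ ε : ℝ) (hA : 0 < A)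
    (hC₀ : 0 < C₀) (hC₁ : 0 < C₁) (hC₂ : 0 < C₂)
    (hε : ε ∈ Ioo (0 : ℝ) (Real.exp (-1)))
    (g : ℝ → EuclideanSpace ℝ (Fin n))
    (k : ℝ → ℝ → EuclideanSpace ℝ (Fin n) → EuclideanSpace ℝ (Fin n))
    (h : ℝ → ℝ → ℝ) (f : ℝ → EuclideanSpace ℝ (Fin n))
    (Hg : ∀ x ∈ Icc (0 : ℝ) A, ‖g x‖ ≤ C₀ * |Real.log ε|)
    (Hk0 : ∀ x y : ℝ, k x y 0 = 0)
    (HkL : ∀ (x y : ℝ) (u v : EuclideanSpace ℝ (Fin n)),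
      ‖k x y u - k x y v‖ ≤ C₁ * |Real.log ε| ^ b * ‖u - v‖)
    (Hh : ∀ x y : ℝ, |h x y| ≤ C₂ * |Real.log ε| ^ m)
    (Hf : ContinuousOn f (Icc 0 A))
    (Heq : ∀ x ∈ Icc (0 : ℝ) A, f x = g x + ∫ y in Ioc (0 : ℝ) x, h x y • k x y (f y)) :
    ∀ x ∈ Icc (0 : ℝ) A,
      ‖f x‖ ≤ C₀ * |Real.log ε| *
        Real.exp (C₁ * C₂ * |Real.log ε| ^ (b + m) * x) := by
  set L : ℝ := |Real.log ε| with hLdef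
  have hL1 : 1 < L := by
    have hlt : Real.log ε < -1 := by
      have := Real.log_lt_log hε.1 hε.2
      simpa [Real.log_exp] using this
    have : Real.log ε < 0 := hlt.trans (by norm_num)
    rw [hLdef, abs_of_neg this]; linarith
  have hL0 : 0 < L := lt_trans one_pos hL1
  set K : ℝ := C₁ * C₂ * L ^ (b + m) with hKdef
  have hK0 : 0 < K := by positivity
  -- the truncated function
  set p : ℝ → ℝ := fun y => max 0 (min y A) with hpdef
  have hpmem : ∀ y, p y ∈ Icc (0 : ℝ) A := fun y =>
    ⟨le_max_left _ _, max_le hA.le (min_le_right _ _)⟩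
  have hpc : Continuous p := continuous_const.max (continuous_id.min continuous_const)
  have hpeq : ∀ y ∈ Icc (0 : ℝ) A, p y = y := by
    intro y hy
    simp [hpdef, min_eq_left hy.2, max_eq_right hy.1]
  set F : ℝ → ℝ := fun y => ‖f (p y)‖ with hFdef
  have hFc : Continuous F := continuous_norm.comp (Hf.comp_continuous hpc hpmem)
  have hFnn : ∀ y, 0 ≤ F y := fun y => norm_nonneg _
  set φ : ℝ → ℝ := fun u => ∫ y in (0:ℝ)..u, F y with hφdef
  have hφder : ∀ x : ℝ, HasDerivAt φ (F x) x := fun x =>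
    intervalIntegral.integral_hasDerivAt_right (hFc.intervalIntegrable _ _)
      (hFc.stronglyMeasurable.stronglyMeasurableAtFilter) hFc.continuousAt
  have hφc : Continuous φ := by
    rw [continuous_iff_continuousAt]; exact fun x => (hφder x).continuousAt
  have hφnn : ∀ x, 0 ≤ x → 0 ≤ φ x := fun x hx =>
    intervalIntegral.integral_nonneg hx (fun y _ => hFnn y)
  -- the basic integral inequality
  have key : ∀ x ∈ Icc (0 : ℝ) A, ‖f x‖ ≤ K * φ x + C₀ * L := by
    intro x hx
    rw [Heq x hx]
    have h1 : ‖g x + ∫ y in Ioc (0 : ℝ) x, h x y • k x y (f y)‖ ≤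
        C₀ * L + ‖∫ y in Ioc (0 : ℝ) x, h x y • k x y (f y)‖ :=
      (norm_add_le _ _).trans (add_le_add_left (Hg x hx) _)
    have h2 : ‖∫ y in Ioc (0 : ℝ) x, h x y • k x y (f y)‖ ≤
        ∫ y in Ioc (0 : ℝ) x, ‖h x y • k x y (f y)‖ :=
      norm_integral_le_integral_norm _
    have hKFi : IntegrableOn (fun y => K * F y) (Ioc 0 x) volume :=
      (continuous_const.mul hFc).integrableOn_Ioc
    have h3 : (∫ y in Ioc (0 : ℝ) x, ‖h x y • k x y (f y)‖) ≤
        ∫ y in Ioc (0 : ℝ) x, K * F y := by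
      refine integral_mono_of_nonneg (Filter.Eventually.of_forall fun y => norm_nonneg _)
        hKFi ?_
      rw [Filter.EventuallyLE, ae_restrict_iff' measurableSet_Ioc]
      refine Filter.Eventually.of_forall fun y hy => ?_
      have hyIcc : y ∈ Icc (0 : ℝ) A := ⟨hy.1.le, hy.2.trans hx.2⟩
      have hk' : ‖k x y (f y)‖ ≤ C₁ * L ^ b * ‖f y‖ := by
        have := HkL x y (f y) 0
        simpa [Hk0 x y] using this
      have : ‖h x y • k x y (f y)‖ ≤ (C₂ * L ^ m) * (C₁ * L ^ b * ‖f y‖) := by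
        rw [norm_smul, Real.norm_eq_abs]
        exact mul_le_mul (Hh x y) hk' (norm_nonneg _) (by positivity)
      refine this.trans (le_of_eq ?_)
      rw [hFdef]
      simp only [hpeq y hyIcc]
      rw [hKdef, Real.rpow_add hL0]
      ring
    have h4 : (∫ y in Ioc (0 : ℝ) x, K * F y) = K * φ x := by
      show _ = K * ∫ y in (0:ℝ)..x, F y
      rw [intervalIntegral.integral_of_le hx.1, MeasureTheory.integral_const_mul]
    calc ‖g x + ∫ y in Ioc (0 : ℝ) x, h x y • k x y (f y)‖
        ≤ C₀ * L + ‖∫ y in Ioc (0 : ℝ) x, h x y • k x y (f y)‖ := h1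
      _ ≤ C₀ * L + (K * φ x) := add_le_add_right (h2.trans (h3.trans_eq h4)) _
      _ = K * φ x + C₀ * L := by ring
  -- Grönwall
  have hgron : ∀ x ∈ Icc (0 : ℝ) A, ‖φ x‖ ≤ gronwallBound 0 K (C₀ * L) (x - 0) := by
    refine norm_le_gronwallBound_of_norm_deriv_right_le (f := φ) (f' := F)
      hφc.continuousOn (fun x _ => (hφder x).hasDerivWithinAt) ?_ ?_
    · simp [hφdef]
    · intro x hx
      have hx' : x ∈ Icc (0 : ℝ) A := ⟨hx.1, hx.2.le⟩
      have h1 : ‖F x‖ = ‖f x‖ := by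
        rw [hFdef, Real.norm_eq_abs, abs_of_nonneg (norm_nonneg _), hpeq x hx']
      rw [h1]
      refine (key x hx').trans (add_le_add_left ?_ _)
      exact mul_le_mul_of_nonneg_left (le_abs_self _) hK0.le
  intro x hx
  have hφb : φ x ≤ C₀ * L / K * (Real.exp (K * x) - 1) := by
    have := hgron x hx
    rw [gronwallBound_of_K_ne_0 hK0.ne'] at this
    calc φ x ≤ ‖φ x‖ := le_abs_self _
      _ ≤ 0 * Real.exp (K * (x - 0)) + C₀ * L / K * (Real.exp (K * (x - 0)) - 1) := this
      _ = C₀ * L / K * (Real.exp (K * x) - 1) := by ring_nf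
  have : ‖f x‖ ≤ C₀ * L * Real.exp (K * x) := by
    have h1 := key x hx
    have h2 : K * φ x + C₀ * L ≤ K * (C₀ * L / K * (Real.exp (K * x) - 1)) + C₀ * L :=
      add_le_add_left (mul_le_mul_of_nonneg_left hφb hK0.le) _
    have h3 : K * (C₀ * L / K * (Real.exp (K * x) - 1)) + C₀ * L
        = C₀ * L * Real.exp (K * x) := by
      field_simp
      ring
    linarith
  exact this


theorem stmt_15 (A : ℝ) (hA : 0 < A) (n : ℕ) (hn : 1 ≤ n)
    (b m : ℝ) (hb : 0 ≤ b) (hm : 0 ≤ m) (hbm : b + m ≤ 1)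
    (C₀ C₁ C₂ : ℝ) (hC₀ : 0 < C₀) (hC₁ : 0 < C₁) (hC₂ : 0 < C₂) :
    (∀ ε ∈ Ioo (0 : ℝ) (Real.exp (-1)),
      ∀ (g : ℝ → EuclideanSpace ℝ (Fin n))
        (k : ℝ → ℝ → EuclideanSpace ℝ (Fin n) → EuclideanSpace ℝ (Fin n))
        (h : ℝ → ℝ → ℝ) (f : ℝ → EuclideanSpace ℝ (Fin n)),
        VolterraHyp A b m C₀ C₁ C₂ ε g k h f →
        ∀ x ∈ Icc (0 : ℝ) A,
          ‖f x‖ ≤ C₀ * |Real.log ε| *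
            Real.exp (C₁ * C₂ * |Real.log ε| ^ (b + m) * A)) ∧
    ∃ C > (0 : ℝ), ∃ N : ℕ, ∀ ε ∈ Ioo (0 : ℝ) (Real.exp (-1)),
      ∀ (g : ℝ → EuclideanSpace ℝ (Fin n))
        (k : ℝ → ℝ → EuclideanSpace ℝ (Fin n) → EuclideanSpace ℝ (Fin n))
        (h : ℝ → ℝ → ℝ) (f : ℝ → EuclideanSpace ℝ (Fin n)),
        VolterraHyp A b m C₀ C₁ C₂ ε g k h f →
        ∀ x ∈ Icc (0 : ℝ) A, ‖f x‖ ≤ C * ε ^ (-(N : ℝ)) := by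
  
  constructor
  · intro ε hε g k h f H x hx
    obtain ⟨Hgc, Hg, Hk0, HkL, Hhm, Hh, Hf, Heq⟩ := H
    have key := volterra_key A b m C₀ C₁ C₂ ε hA hC₀ hC₁ hC₂ hε g k h f Hg Hk0 HkL Hh Hf Heq x hx
    refine key.trans ?_
    have hL0 : (0:ℝ) < |Real.log ε| := by
      have : Real.log ε < 0 := by
        have := Real.log_lt_log hε.1 hε.2
        rw [Real.log_exp] at this; linarith
      simp [abs_of_neg this]; linarith
    refine mul_le_mul_of_nonneg_left (Real.exp_le_exp.2 ?_) (by positivity)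
    refine mul_le_mul_of_nonneg_left hx.2 (by positivity)
  · refine ⟨C₀, hC₀, ⌈C₁ * C₂ * A⌉₊ + 1, ?_⟩
    intro ε hε g k h f H x hx
    obtain ⟨Hgc, Hg, Hk0, HkL, Hhm, Hh, Hf, Heq⟩ := H
    have key := volterra_key A b m C₀ C₁ C₂ ε hA hC₀ hC₁ hC₂ hε g k h f Hg Hk0 HkL Hh Hf Heq x hx
    set L : ℝ := |Real.log ε| with hLdef
    have hlogneg : Real.log ε < 0 := by
      have := Real.log_lt_log hε.1 hε.2
      rw [Real.log_exp] at this; linarith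
    have hL : L = -Real.log ε := abs_of_neg hlogneg
    have hL1 : 1 < L := by
      have := Real.log_lt_log hε.1 hε.2
      rw [Real.log_exp] at this
      rw [hL]; linarith
    have hL0 : (0:ℝ) < L := by linarith
    set N : ℕ := ⌈C₁ * C₂ * A⌉₊ + 1 with hNdef
    have hNge : 1 + C₁ * C₂ * A ≤ (N : ℝ) := by
      have := Nat.le_ceil (C₁ * C₂ * A)
      rw [hNdef]; push_cast; linarith
    have hpow : L ^ (b + m) ≤ L := by
      have := Real.rpow_le_rpow_of_exponent_le hL1.le hbm
      rwa [Real.rpow_one] at this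
    have hLexp : L ≤ Real.exp L := by
      have := Real.add_one_le_exp L; linarith
    calc ‖f x‖ ≤ C₀ * L * Real.exp (C₁ * C₂ * L ^ (b + m) * x) := key
      _ ≤ C₀ * L * Real.exp (C₁ * C₂ * L * A) := by
          refine mul_le_mul_of_nonneg_left (Real.exp_le_exp.2 ?_) (by positivity)
          have h1 : C₁ * C₂ * L ^ (b + m) ≤ C₁ * C₂ * L :=
            mul_le_mul_of_nonneg_left hpow (by positivity)
          have h2 : (0:ℝ) ≤ C₁ * C₂ * L ^ (b + m) := by positivity
          exact mul_le_mul h1 hx.2 hx.1 (by positivity)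
      _ ≤ C₀ * Real.exp L * Real.exp (C₁ * C₂ * L * A) :=
          mul_le_mul_of_nonneg_right (mul_le_mul_of_nonneg_left hLexp hC₀.le)
            (Real.exp_nonneg _)
      _ = C₀ * Real.exp ((1 + C₁ * C₂ * A) * L) := by
          rw [mul_assoc, ← Real.exp_add]; ring_nf
      _ ≤ C₀ * Real.exp ((N : ℝ) * L) :=
          mul_le_mul_of_nonneg_left
            (Real.exp_le_exp.2 (mul_le_mul_of_nonneg_right hNge hL0.le)) hC₀.le
      _ = C₀ * ε ^ (-(N : ℝ)) := by
          rw [Real.rpow_def_of_pos hε.1]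
          congr 1
          rw [hL]; ring
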